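/- Let K₁ and K₂ be nonempty closed convex subsets of ℝⁿ. Then the set S = { x ∈ ℝⁿ : dist(x,K₁) = dist(x,K₂) and proj_{K₁}(x) ≠ proj_{K₂}(x) } has Lebesgue measure zero. -/

import Mathlib

open Metric MeasureTheory RealInnerProductSpace

section aux
variable {F : Type*} [NormedAddCommGroup F] [InnerProductSpace ℝ F]

lemma var_ineq {K : Set F} (hconv : Convex ℝ K) {p : F → F}
    (hp : ∀ x, p x ∈ K ∧ ∀ q ∈ K, dist x (p x) ≤ dist x q) (x : F) :
    ∀ q ∈ K, ⟪x - p x, q - p x⟫ ≤ 0 := by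
  haveI : Nonempty K := ⟨⟨p x, (hp x).1⟩⟩
  rw [← norm_eq_iInf_iff_real_inner_le_zero hconv (hp x).1]
  refine le_antisymm (le_ciInf fun w => ?_) (ciInf_le (⟨0, fun _ ⟨_, h⟩ => h ▸ norm_nonneg _⟩ : BddBelow (Set.range fun w : K => ‖x - (w : F)‖)) ⟨p x, (hp x).1⟩)
  simpa [dist_eq_norm] using (hp x).2 w w.2

lemma proj_lip {K : Set F} (hconv : Convex ℝ K) {p : F → F}
    (hp : ∀ x, p x ∈ K ∧ ∀ q ∈ K, dist x (p x) ≤ dist x q) (x y : F) :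
    ‖p x - p y‖ ≤ ‖x - y‖ := by
  have h1 : ⟪x - p x, p y - p x⟫ ≤ 0 := var_ineq hconv hp x (p y) (hp y).1
  have h2 : ⟪y - p y, p x - p y⟫ ≤ 0 := var_ineq hconv hp y (p x) (hp x).1
  have key : ‖p x - p y‖ ^ 2 ≤ ⟪x - y, p x - p y⟫ := by
    have e1 : x - y = ((x - p x) - (y - p y)) + (p x - p y) := by abel
    have e2 : ⟪x - p x, p x - p y⟫ = - ⟪x - p x, p y - p x⟫ := by
      rw [← inner_neg_right]; congr 1; abel
    rw [e1, inner_add_left, inner_sub_left, real_inner_self_eq_norm_sq]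
    linarith
  have cs : ⟪x - y, p x - p y⟫ ≤ ‖x - y‖ * ‖p x - p y‖ := real_inner_le_norm _ _
  rcases eq_or_lt_of_le (norm_nonneg (p x - p y)) with h | h
  · rw [← h]; exact norm_nonneg _
  · have := key.trans cs
    rw [sq] at this
    exact le_of_mul_le_mul_right (by linarith [this]) h


lemma sqdist_hasFDerivAt {K : Set F} (hconv : Convex ℝ K) {p : F → F}
    (hp : ∀ x, p x ∈ K ∧ ∀ q ∈ K, dist x (p x) ≤ dist x q) (x : F) :
    HasFDerivAt (fun y => ‖y - p y‖ ^ 2) ((2 : ℝ) • (innerSL ℝ (x - p x))) x := by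
  rw [hasFDerivAt_iff_isLittleO_nhds_zero]
  have hO : (fun h : F => ‖x + h - p (x + h)‖ ^ 2 - ‖x - p x‖ ^ 2
      - ((2 : ℝ) • (innerSL ℝ (x - p x))) h) =O[nhds 0] fun h : F => ‖h‖ * ‖h‖ := by
    refine Asymptotics.IsBigO.of_bound 1 (Filter.Eventually.of_forall fun h => ?_)
    set y := x + h with hy
    have happ : ((2 : ℝ) • (innerSL ℝ (x - p x))) h = 2 * ⟪x - p x, h⟫ := rfl
    have up : ‖y - p y‖ ^ 2 ≤ ‖y - p x‖ ^ 2 := by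
      have := (hp y).2 (p x) (hp x).1
      rw [dist_eq_norm, dist_eq_norm] at this
      exact pow_le_pow_left₀ (norm_nonneg _) this 2
    have eq1 : ‖y - p x‖ ^ 2 = ‖x - p x‖ ^ 2 + 2 * ⟪x - p x, h⟫ + ‖h‖ ^ 2 := by
      have : y - p x = (x - p x) + h := by rw [hy]; abel
      rw [this, norm_add_sq_real]
    have low : ‖x - p x‖ ^ 2 ≤ ‖x - p y‖ ^ 2 := by
      have := (hp x).2 (p y) (hp y).1
      rw [dist_eq_norm, dist_eq_norm] at this
      exact pow_le_pow_left₀ (norm_nonneg _) this 2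
    have eq2 : ‖x - p y‖ ^ 2 = ‖y - p y‖ ^ 2 - 2 * ⟪y - p y, h⟫ + ‖h‖ ^ 2 := by
      have e : x - p y = (y - p y) + (-h) := by rw [hy]; abel
      rw [e, norm_add_sq_real, inner_neg_right, norm_neg]
      ring
    have cross : ⟪y - p y, h⟫ = ⟪x - p x, h⟫ + ‖h‖ ^ 2 + ⟪p x - p y, h⟫ := by
      have e : y - p y = (x - p x) + h + (p x - p y) := by rw [hy]; abel
      rw [e, inner_add_left, inner_add_left, real_inner_self_eq_norm_sq]
    have hpb : ‖p x - p y‖ ≤ ‖h‖ := by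
      have := proj_lip hconv hp x y
      have e : x - y = -h := by rw [hy]; abel
      rwa [e, norm_neg] at this
    have hib : |⟪p x - p y, h⟫| ≤ ‖h‖ ^ 2 := by
      refine (abs_real_inner_le_norm _ _).trans ?_
      rw [sq]
      exact mul_le_mul_of_nonneg_right hpb (norm_nonneg _)
    have hnn : ‖‖h‖ * ‖h‖‖ = ‖h‖ ^ 2 := by
      rw [Real.norm_eq_abs, abs_of_nonneg (mul_nonneg (norm_nonneg _) (norm_nonneg _)), sq]
    rw [happ, Real.norm_eq_abs, abs_le, hnn]
    have habs := abs_le.1 hib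
    constructor
    · linarith [habs.1]
    · linarith [habs.2]
  refine hO.trans_isLittleO ?_
  rw [← Asymptotics.isLittleO_norm_right]
  have h1 : (fun h : F => ‖h‖) =o[nhds 0] (fun _ : F => (1 : ℝ)) :=
    (Asymptotics.isLittleO_one_iff ℝ).2 tendsto_norm_zero
  have h2 : (fun h : F => ‖h‖) =O[nhds 0] (fun h : F => ‖h‖) := Asymptotics.isBigO_refl _ _
  simpa using h1.mul_isBigO h2

end aux

lemma eventually_ne_of_deriv {φ : ℝ → ℝ} {t c : ℝ} (hd : HasDerivAt φ c t)
    (h0 : φ t = 0) (hc : c ≠ 0) : ∀ᶠ s in nhdsWithin t {t}ᶜ, φ s ≠ 0 := by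
  have hs := hasDerivAt_iff_tendsto_slope.1 hd
  have h1 : ∀ᶠ s in nhdsWithin t {t}ᶜ, slope φ t s ≠ 0 := hs.eventually_ne hc
  have h2 : ∀ᶠ s in nhdsWithin t {t}ᶜ, s ≠ t := by
    filter_upwards [self_mem_nhdsWithin] with s hs'
    simpa using hs'
  filter_upwards [h1, h2] with s hs1 hs2 hphi
  apply hs1
  rw [slope_def_field, hphi, h0]
  simp

lemma countable_of_forall_isolated {α : Type*} [TopologicalSpace α]
    [SecondCountableTopology α] {T : Set α}
    (h : ∀ t ∈ T, ∀ᶠ s in nhdsWithin t {t}ᶜ, s ∉ T) : T.Countable := by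
  have hmem : ∀ t ∈ T, {t} ∈ nhdsWithin t T := by
    intro t ht
    have h1 := eventually_nhdsWithin_iff.1 (h t ht)
    have h2 : ∀ᶠ s in nhdsWithin t T, s ≠ t → s ∉ T :=
      (h1.filter_mono nhdsWithin_le_nhds).mono (by intro s hs hst; exact hs (by simpa using hst))
    have h3 : ∀ᶠ s in nhdsWithin t T, s ∈ T := self_mem_nhdsWithin
    filter_upwards [h2, h3] with s hs2 hs3
    simp only [Set.mem_singleton_iff]
    by_contra hne
    exact hs2 hne hs3
  obtain ⟨u, huT, huc, hcov⟩ := TopologicalSpace.countable_cover_nhdsWithin hmem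
  refine Set.Countable.mono ?_ huc
  intro x hx
  obtain ⟨y, hy, hxy⟩ := Set.mem_iUnion₂.1 (hcov hx)
  rw [Set.mem_singleton_iff] at hxy
  rwa [hxy]

lemma null_of_countable_slices {n : ℕ} (A : Set (Fin n → ℝ)) (hA : MeasurableSet A) (i : Fin n)
    (h : ∀ f : Fin n → ℝ, {t : ℝ | Function.update f i t ∈ A}.Countable) :
    volume A = 0 := by
  classical
  haveI : Unique {j : Fin n // ¬ j ≠ i} :=
    { default := ⟨i, not_ne_iff.2 rfl⟩, uniq := fun a => Subtype.ext (not_ne_iff.1 a.2) }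
  set Φ := MeasurableEquiv.piEquivPiSubtypeProd (fun _ : Fin n => ℝ) (fun j => j ≠ i) with hΦdef
  have hΦ : MeasurePreserving Φ.symm volume volume :=
    (volume_preserving_piEquivPiSubtypeProd (fun _ : Fin n => ℝ) (fun j => j ≠ i)).symm
  have hkey : volume (Φ.symm ⁻¹' A) = volume A := hΦ.measure_preimage hA.nullMeasurableSet
  rw [← hkey]
  have hmeas : MeasurableSet (Φ.symm ⁻¹' A) := Φ.symm.measurable hA
  rw [Measure.volume_eq_prod, Measure.measure_prod_null hmeas]
  have lhs : ∀ (z : ({ j : Fin n // j ≠ i } → ℝ) × ({ j : Fin n // ¬ j ≠ i } → ℝ)) (j : Fin n),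
      Φ.symm z j = if h : j ≠ i then z.1 ⟨j, h⟩ else z.2 ⟨j, h⟩ := fun z j => by
    show (Equiv.piEquivPiSubtypeProd (fun j => j ≠ i) (fun _ : Fin n => ℝ)).symm z j = _
    rw [Equiv.piEquivPiSubtypeProd_symm_apply]
  refine Filter.Eventually.of_forall fun x => ?_
  have hsl : Prod.mk x ⁻¹' (Φ.symm ⁻¹' A)
      = (MeasurableEquiv.funUnique {j : Fin n // ¬ j ≠ i} ℝ) ⁻¹'
        {t : ℝ | Function.update (Φ.symm (x, fun _ => 0)) i t ∈ A} := by
    ext y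
    simp only [Set.mem_preimage, Set.mem_setOf_eq, MeasurableEquiv.funUnique_apply]
    have heq : Φ.symm (x, y) = Function.update (Φ.symm (x, fun _ => 0)) i (y default) := by
      funext j
      by_cases hj : j ≠ i
      · rw [Function.update_of_ne hj, lhs, lhs, dif_pos hj, dif_pos hj]
      · have hji : j = i := not_ne_iff.1 hj
        subst hji
        rw [Function.update_self, lhs, dif_neg hj]
        exact congrArg y (Subsingleton.elim _ _)
    rw [heq]
  show volume (Prod.mk x ⁻¹' (Φ.symm ⁻¹' A)) = 0
  rw [hsl]
  have hc := h (Φ.symm (x, fun _ => 0))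
  exact (hc.preimage (MeasurableEquiv.funUnique {j : Fin n // ¬ j ≠ i} ℝ).injective).measure_zero _

theorem stmt1 {n : ℕ} (K₁ K₂ : Set (EuclideanSpace ℝ (Fin n)))
    (hne₁ : K₁.Nonempty) (hcl₁ : IsClosed K₁) (hconv₁ : Convex ℝ K₁)
    (hne₂ : K₂.Nonempty) (hcl₂ : IsClosed K₂) (hconv₂ : Convex ℝ K₂)
    (proj₁ proj₂ : EuclideanSpace ℝ (Fin n) → EuclideanSpace ℝ (Fin n))
    (hproj₁ : ∀ x, proj₁ x ∈ K₁ ∧ ∀ q ∈ K₁, dist x (proj₁ x) ≤ dist x q)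
    (hproj₂ : ∀ x, proj₂ x ∈ K₂ ∧ ∀ q ∈ K₂, dist x (proj₂ x) ≤ dist x q) :
    volume {x : EuclideanSpace ℝ (Fin n) |
      infDist x K₁ = infDist x K₂ ∧ proj₁ x ≠ proj₂ x} = 0 := by
  classical
  have hcont1 : Continuous proj₁ := by
    refine (LipschitzWith.of_dist_le_mul (K := 1) fun x y => ?_).continuous
    simpa [dist_eq_norm] using proj_lip hconv₁ hproj₁ x y
  have hcont2 : Continuous proj₂ := by
    refine (LipschitzWith.of_dist_le_mul (K := 1) fun x y => ?_).continuous
    simpa [dist_eq_norm] using proj_lip hconv₂ hproj₂ x y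
  set g : EuclideanSpace ℝ (Fin n) → ℝ :=
    fun x => ‖x - proj₁ x‖ ^ 2 - ‖x - proj₂ x‖ ^ 2 with hgdef
  have hgderiv : ∀ x, HasFDerivAt g ((2:ℝ) • (innerSL ℝ (proj₂ x - proj₁ x))) x := by
    intro x
    have h1 := sqdist_hasFDerivAt hconv₁ hproj₁ x
    have h2 := sqdist_hasFDerivAt hconv₂ hproj₂ x
    have h3 := h1.sub h2
    refine h3.congr_fderiv ?_
    have e : proj₂ x - proj₁ x = (x - proj₁ x) - (x - proj₂ x) := by abel
    rw [e, map_sub (innerSL ℝ) (x - proj₁ x) (x - proj₂ x), smul_sub]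
  have hgc : Continuous g :=
    ((continuous_id.sub hcont1).norm.pow 2).sub ((continuous_id.sub hcont2).norm.pow 2)
  set T : Fin n → Set (EuclideanSpace ℝ (Fin n)) := fun i =>
    {x | g x = 0 ∧ (proj₂ x - proj₁ x) i ≠ 0} with hTdef
  have hTmeas : ∀ i, MeasurableSet (T i) := by
    intro i
    have hco : Continuous fun x => (proj₂ x - proj₁ x) i :=
      (EuclideanSpace.proj i).continuous.comp (hcont2.sub hcont1)
    have : T i = g ⁻¹' {0} ∩ (fun x => (proj₂ x - proj₁ x) i) ⁻¹' ({0}ᶜ) := by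
      ext x; simp [hTdef]
    rw [this]
    exact ((measurableSet_singleton (0:ℝ)).preimage hgc.measurable).inter
      (((measurableSet_singleton (0:ℝ)).compl).preimage hco.measurable)
  have hsub : {x : EuclideanSpace ℝ (Fin n) |
      infDist x K₁ = infDist x K₂ ∧ proj₁ x ≠ proj₂ x} ⊆ ⋃ i, T i := by
    rintro x ⟨hdist, hne⟩
    have hd1 : infDist x K₁ = ‖x - proj₁ x‖ := by
      refine le_antisymm ?_ ?_
      · simpa [dist_eq_norm] using infDist_le_dist_of_mem (hproj₁ x).1
      · rw [infDist_eq_iInf]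
        haveI : Nonempty K₁ := hne₁.to_subtype
        refine le_ciInf fun q => ?_
        simpa [dist_eq_norm] using (hproj₁ x).2 q q.2
    have hd2 : infDist x K₂ = ‖x - proj₂ x‖ := by
      refine le_antisymm ?_ ?_
      · simpa [dist_eq_norm] using infDist_le_dist_of_mem (hproj₂ x).1
      · rw [infDist_eq_iInf]
        haveI : Nonempty K₂ := hne₂.to_subtype
        refine le_ciInf fun q => ?_
        simpa [dist_eq_norm] using (hproj₂ x).2 q q.2
    have hnorm : ‖x - proj₁ x‖ = ‖x - proj₂ x‖ := by rw [← hd1, ← hd2, hdist]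
    have hg0 : g x = 0 := by rw [hgdef]; simp only [hnorm, sub_self]
    have hv : proj₂ x - proj₁ x ≠ 0 := sub_ne_zero.2 (Ne.symm hne)
    have hex : ∃ i, (proj₂ x - proj₁ x) i ≠ 0 := by
      by_contra hcon
      push_neg at hcon
      apply hv
      ext i
      exact hcon i
    obtain ⟨i, hi⟩ := hex
    exact Set.mem_iUnion.2 ⟨i, ⟨hg0, hi⟩⟩
  refine measure_mono_null hsub (measure_iUnion_null fun i => ?_)
  set e := (MeasurableEquiv.toLp 2 (Fin n → ℝ)).symm with he
  have hep : MeasurePreserving e.symm volume volume :=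
    (EuclideanSpace.volume_preserving_symm_measurableEquiv_toLp (Fin n)).symm
  have hkey : volume (e.symm ⁻¹' T i) = volume (T i) :=
    hep.measure_preimage (hTmeas i).nullMeasurableSet
  rw [← hkey]
  apply null_of_countable_slices _ (e.symm.measurable (hTmeas i)) i
  intro f
  set w : EuclideanSpace ℝ (Fin n) := EuclideanSpace.single i 1 with hwdef
  set x₀ : EuclideanSpace ℝ (Fin n) := e.symm (Function.update f i 0) with hx0def
  have hesymm : ∀ (u : Fin n → ℝ) (j : Fin n), e.symm u j = u j := fun u j => rfl
  have hline : ∀ t : ℝ, e.symm (Function.update f i t) = x₀ + t • w := by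
    intro t
    ext j
    have hrhs : (x₀ + t • w) j = x₀ j + t * w j := rfl
    rw [hesymm, hrhs, hx0def, hesymm, hwdef, EuclideanSpace.single_apply]
    by_cases hj : j = i
    · subst hj; rw [Function.update_self, Function.update_self, if_pos rfl]; ring
    · rw [Function.update_of_ne hj, Function.update_of_ne hj, if_neg hj]; ring
  have hsetline : ∀ t : ℝ, (Function.update f i t ∈ e.symm ⁻¹' T i) ↔
      (g (x₀ + t • w) = 0 ∧ (proj₂ (x₀ + t • w) - proj₁ (x₀ + t • w)) i ≠ 0) := by
    intro t
    rw [Set.mem_preimage, hline t]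
    rfl
  apply countable_of_forall_isolated
  intro t ht
  rw [Set.mem_setOf_eq, hsetline t] at ht
  obtain ⟨hgz, hvi⟩ := ht
  set y := x₀ + t • w with hydef
  have hL : HasDerivAt (fun s : ℝ => x₀ + s • w) w t := by
    simpa using ((hasDerivAt_id t).smul_const w).const_add x₀
  have hφ : HasDerivAt (fun s : ℝ => g (x₀ + s • w))
      (((2:ℝ) • (innerSL ℝ (proj₂ y - proj₁ y))) w) t :=
    by have := (hgderiv y).comp_hasDerivAt t hL; exact this
  have hcval : (((2:ℝ) • (innerSL ℝ (proj₂ y - proj₁ y)))) w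
      = 2 * ((proj₂ y - proj₁ y) i) := by
    have : (innerSL ℝ (proj₂ y - proj₁ y)) w
        = @inner ℝ _ _ (proj₂ y - proj₁ y) (EuclideanSpace.single i (1:ℝ)) := rfl
    rw [ContinuousLinearMap.smul_apply, this, EuclideanSpace.inner_single_right]
    simp [smul_eq_mul]
  rw [hcval] at hφ
  have hcne : 2 * ((proj₂ y - proj₁ y) i) ≠ 0 := mul_ne_zero two_ne_zero hvi
  have hev := eventually_ne_of_deriv hφ hgz hcne
  filter_upwards [hev] with s hs hmem
  rw [hsetline s] at hmem
  exact hs hmem.1
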